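/- Let F be a finite field of odd characteristic with quadratic character λ, and let a ∈ F^×. Then Σ_{x∈F} λ(x³ + a) = −λ(a)·Σ_ξ ξ(4a)·j_F(ξ, ξ, ξ), where the sum on the right ranges over the nontrivial multiplicative characters ξ of F satisfying ξ³ = 𝟙 (this sum is empty if 3 does not divide |F| − 1). -/

import Mathlib

open Finset

/-- The Jacobi sum `j_F(χ₁, χ₂, χ₃) = ∑_{x₁+x₂+x₃=1} χ₁(x₁)·χ₂(x₂)·χ₃(x₃)` attached to three
multiplicative characters of a finite field `F`. -/
noncomputable def jacobiSum₃ {F : Type*} [Field F] [Fintype F] [DecidableEq F]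
    (χ₁ χ₂ χ₃ : MulChar F ℂ) : ℂ :=
  ∑ v ∈ Finset.univ.filter (fun v : F × F × F => v.1 + v.2.1 + v.2.2 = 1),
    χ₁ v.1 * χ₂ v.2.1 * χ₃ v.2.2

open scoped Classical
set_option linter.unusedSectionVars false

section Aux

variable {F : Type*} [Field F] [Fintype F] [DecidableEq F]

private lemma hasEnoughCRoU (n : ℕ) (hn : n ≠ 0) : HasEnoughRootsOfUnity ℂ n := by
  have : NeZero ((n : ℂ)) := ⟨Nat.cast_ne_zero.mpr hn⟩
  infer_instance

private lemma lam_ne_one {lam : MulChar F ℂ} (hlam : orderOf lam = 2) : lam ≠ 1 := by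
  intro h
  rw [h, orderOf_one] at hlam
  norm_num at hlam

private lemma lam_sq {lam : MulChar F ℂ} (hlam : orderOf lam = 2) {x : F} (hx : x ≠ 0) :
    lam x * lam x = 1 := by
  have h2 : lam ^ 2 = 1 := hlam ▸ pow_orderOf_eq_one lam
  have := congrArg (fun χ : MulChar F ℂ => χ x) h2
  simpa [pow_two, MulChar.mul_apply, MulChar.one_apply (isUnit_iff_ne_zero.mpr hx)] using this

private lemma lam_count (hodd : ringChar F ≠ 2) {lam : MulChar F ℂ} (hlam : orderOf lam = 2)
    (v : F) : ((univ.filter fun w : F => w ^ 2 = v).card : ℂ) = 1 + lam v := by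
  have h2 : (2 : F) ≠ 0 := Ring.two_ne_zero hodd
  rcases eq_or_ne v 0 with rfl | hv
  · have : (univ.filter fun w : F => w ^ 2 = 0) = {0} := by
      ext w; simp [pow_eq_zero_iff]
    rw [this]
    simp [MulChar.map_nonunit lam not_isUnit_zero]
  · by_cases hsq : ∃ w : F, w ^ 2 = v
    · obtain ⟨w₀, hw₀⟩ := hsq
      have hw0 : w₀ ≠ 0 := by rintro rfl; simp at hw₀; exact hv hw₀.symm
      have hfil : (univ.filter fun w : F => w ^ 2 = v) = {w₀, -w₀} := by
        ext w
        simp only [mem_filter, mem_univ, true_and, mem_insert, mem_singleton]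
        constructor
        · intro h
          have : (w - w₀) * (w + w₀) = 0 := by rw [← hw₀] at h; ring_nf; linear_combination h
          rcases mul_eq_zero.mp this with h' | h'
          · exact Or.inl (sub_eq_zero.mp h')
          · exact Or.inr (eq_neg_of_add_eq_zero_left h')
        · rintro (rfl | rfl) <;> simp [hw₀, neg_pow, hw₀]
      have hne : w₀ ≠ -w₀ := by
        intro h
        apply hw0
        have : (2 : F) * w₀ = 0 := by linear_combination h
        exact (mul_eq_zero.mp this).resolve_left h2
      rw [hfil]
      rw [card_insert_of_notMem (by simpa using hne), card_singleton]
      have : lam v = 1 := by rw [← hw₀, pow_two, map_mul]; exact lam_sq hlam hw0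
      rw [this]; norm_num
    · have hfil : (univ.filter fun w : F => w ^ 2 = v) = ∅ := by
        ext w; simp only [mem_filter, mem_univ, true_and, notMem_empty, iff_false]
        exact fun h => hsq ⟨w, h⟩
      rw [hfil, card_empty]
      -- show lam v = -1
      obtain ⟨g, hg⟩ := IsCyclic.exists_generator (α := Fˣ)
      have hlg : lam (g : F) = -1 := by
        have hsq1 : lam (g : F) * lam (g : F) = 1 := lam_sq hlam g.ne_zero
        rcases mul_self_eq_one_iff.mp hsq1 with h | h
        · exfalso
          apply lam_ne_one hlam
          rw [MulChar.eq_one_iff]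
          intro x
          obtain ⟨n, hn⟩ := mem_powers_iff_mem_zpowers.mpr (hg x) -- maybe wrong name
          rw [← hn]
          push_cast [map_pow]
          rw [h, one_pow]
        · exact h
      have hvu : (Units.mk0 v hv : Fˣ) ∈ Subgroup.zpowers g := hg _
      obtain ⟨n, hn⟩ := mem_powers_iff_mem_zpowers.mpr hvu
      have hv' : (g : F) ^ n = v := by
        have : g ^ n = Units.mk0 v hv := hn
        rw [← Units.val_pow_eq_pow_val, this]; rfl
      have hodd' : ¬ Even n := by
        intro ⟨m, hm⟩
        exact hsq ⟨(g : F) ^ m, by rw [← pow_mul, ← hv']; congr 1; omega⟩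
      rw [← hv', map_pow, hlg, (Nat.not_even_iff_odd.mp hodd').neg_one_pow]
      ring

end Aux

section Aux2
variable {F : Type*} [Field F] [Fintype F] [DecidableEq F]

private lemma dup (hodd : ringChar F ≠ 2) {lam : MulChar F ℂ} (hlam : orderOf lam = 2)
    {ξ : MulChar F ℂ} (hξ : ξ ≠ 1) :
    jacobiSum ξ lam = ξ 4 * jacobiSum ξ ξ := by
  have h2 : (2 : F) ≠ 0 := Ring.two_ne_zero hodd
  have h4 : (4 : F) ≠ 0 := by
    intro h
    have : (2 : F) * 2 = 0 := by linear_combination h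
    exact h2 ((mul_eq_zero.mp this).resolve_left h2)
  let e : F ≃ F :=
    { toFun := fun w => (w + 1) / 2
      invFun := fun x => 2 * x - 1
      left_inv := fun w => by field_simp; ring
      right_inv := fun x => by field_simp; ring }
  have step1 : jacobiSum ξ ξ = ∑ w : F, ξ ((1 - w ^ 2) * 4⁻¹) := by
    rw [jacobiSum]
    rw [← Equiv.sum_comp e (fun x => ξ x * ξ (1 - x))]
    refine Finset.sum_congr rfl fun w _ => ?_
    rw [← map_mul]
    congr 1
    show (w + 1) / 2 * (1 - (w + 1) / 2) = _
    field_simp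
    ring
  have hx44 : ξ 4 * ξ 4⁻¹ = 1 := by
    rw [← map_mul, mul_inv_cancel₀ h4, map_one]
  have step2 : ξ 4 * jacobiSum ξ ξ = ∑ w : F, ξ (1 - w ^ 2) := by
    rw [step1, Finset.mul_sum]
    refine Finset.sum_congr rfl fun w _ => ?_
    rw [map_mul, ← mul_assoc, mul_comm (ξ 4), mul_assoc, hx44, mul_one]
  rw [step2]
  have step3 : ∑ w : F, ξ (1 - w ^ 2)
      = ∑ v : F, ∑ w ∈ univ.filter fun w : F => w ^ 2 = v, ξ (1 - w ^ 2) :=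
    (Finset.sum_fiberwise_of_maps_to (fun w _ => mem_univ (w ^ 2)) _).symm
  rw [step3]
  have step4 : ∀ v : F, ∑ w ∈ univ.filter (fun w : F => w ^ 2 = v), ξ (1 - w ^ 2)
      = (1 + lam v) * ξ (1 - v) := by
    intro v
    calc ∑ w ∈ univ.filter (fun w : F => w ^ 2 = v), ξ (1 - w ^ 2)
        = ∑ _w ∈ univ.filter (fun w : F => w ^ 2 = v), ξ (1 - v) :=
          Finset.sum_congr rfl fun w hw => by rw [(mem_filter.mp hw).2]
      _ = (1 + lam v) * ξ (1 - v) := by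
          rw [Finset.sum_const, nsmul_eq_mul, lam_count hodd hlam]
  simp_rw [step4, add_mul, one_mul, Finset.sum_add_distrib]
  have h5 : ∑ v : F, ξ (1 - v) = 0 := by
    rw [show (fun v : F => ξ (1 - v)) = fun v => ξ ((Equiv.subLeft (1:F)) v) from rfl,
      Equiv.sum_comp (Equiv.subLeft (1 : F)) ξ]
    exact MulChar.sum_eq_zero_of_ne_one hξ
  rw [h5, zero_add, jacobiSum_comm]
  rfl

end Aux2
section Aux3
variable {F : Type*} [Field F] [Fintype F] [DecidableEq F]

private lemma j3 {ξ : MulChar F ℂ} (hξ : ξ ≠ 1) (hξ3 : ξ ^ 3 = 1) :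
    jacobiSum₃ ξ ξ ξ = - jacobiSum ξ ξ := by
  have hmul : ξ ^ 2 * ξ = 1 := by rw [← pow_succ]; exact hξ3
  have hξ2 : ξ ^ 2 ≠ 1 := by
    intro h
    rw [h, one_mul] at hmul
    exact hξ hmul
  have hinv : (ξ ^ 2)⁻¹ = ξ := inv_eq_of_mul_eq_one_right hmul
  have hA : jacobiSum₃ ξ ξ ξ = ∑ p : F × F, ξ p.1 * ξ p.2 * ξ (1 - p.1 - p.2) := by
    rw [jacobiSum₃]
    refine Finset.sum_nbij' (i := fun v => (v.1, v.2.1))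
      (j := fun p => (p.1, p.2, 1 - p.1 - p.2)) ?_ ?_ ?_ ?_ ?_
    · intro v _; exact mem_univ _
    · intro p _; simp only [mem_filter, mem_univ, true_and]; ring
    · rintro ⟨x, y, z⟩ hv
      simp only [mem_filter, mem_univ, true_and] at hv
      simp only [Prod.mk.injEq, true_and]
      linear_combination -hv
    · intro p _; rfl
    · rintro ⟨x, y, z⟩ hv
      simp only [mem_filter, mem_univ, true_and] at hv
      have : z = 1 - x - y := by linear_combination hv
      rw [this]
  rw [hA]
  have hB : ∑ p : F × F, ξ p.1 * ξ p.2 * ξ (1 - p.1 - p.2)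
      = ∑ s : F, ∑ p ∈ univ.filter (fun p : F × F => p.1 + p.2 = s),
          ξ p.1 * ξ p.2 * ξ (1 - p.1 - p.2) :=
    (Finset.sum_fiberwise_of_maps_to (fun p _ => mem_univ (p.1 + p.2)) _).symm
  rw [hB]
  have hinner : ∀ s : F, ∑ p ∈ univ.filter (fun p : F × F => p.1 + p.2 = s),
      ξ p.1 * ξ p.2 * ξ (1 - p.1 - p.2) = (∑ x : F, ξ x * ξ (s - x)) * ξ (1 - s) := by
    intro s
    rw [Finset.sum_mul]
    refine Finset.sum_nbij' (i := fun p => p.1) (j := fun x => (x, s - x)) ?_ ?_ ?_ ?_ ?_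
    · intro p _; exact mem_univ _
    · intro x _; simp only [mem_filter, mem_univ, true_and]; ring
    · rintro ⟨x, y⟩ hp
      simp only [mem_filter, mem_univ, true_and] at hp
      simp only [Prod.mk.injEq, true_and]
      linear_combination -hp
    · intro x _; rfl
    · rintro ⟨x, y⟩ hp
      simp only [mem_filter, mem_univ, true_and] at hp
      show ξ x * ξ y * ξ (1 - x - y) = ξ x * ξ (s - x) * ξ (1 - s)
      rw [show s - x = y by linear_combination -hp,
        show (1:F) - s = 1 - x - y by linear_combination hp]
  simp_rw [hinner]
  have key : ∀ s : F, (∑ x : F, ξ x * ξ (s - x)) = ξ s * ξ s * jacobiSum ξ ξ := by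
    intro s
    rcases eq_or_ne s 0 with rfl | hs
    · rw [MulChar.map_nonunit ξ not_isUnit_zero, zero_mul, zero_mul]
      have : ∀ x : F, ξ x * ξ (0 - x) = ξ (-1) * (ξ ^ 2) x := by
        intro x
        rw [zero_sub, show -x = -1 * x by ring, map_mul, MulChar.pow_apply' ξ two_ne_zero]
        ring
      simp_rw [this, ← Finset.mul_sum, MulChar.sum_eq_zero_of_ne_one hξ2, mul_zero]
    · rw [← Equiv.sum_comp (Equiv.mulLeft₀ s hs) (fun x => ξ x * ξ (s - x))]
      have : ∀ t : F, ξ ((Equiv.mulLeft₀ s hs) t) * ξ (s - (Equiv.mulLeft₀ s hs) t)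
          = ξ s * ξ s * (ξ t * ξ (1 - t)) := by
        intro t
        have h1 : (Equiv.mulLeft₀ s hs) t = s * t := rfl
        have h2 : s - s * t = s * (1 - t) := by ring
        rw [h1, h2, map_mul, map_mul]
        ring
      simp_rw [this, ← Finset.mul_sum]
      rfl
  simp_rw [key]
  have : ∀ s : F, ξ s * ξ s * jacobiSum ξ ξ * ξ (1 - s)
      = jacobiSum ξ ξ * ((ξ ^ 2) s * ξ (1 - s)) := by
    intro s
    rw [MulChar.pow_apply' ξ two_ne_zero]
    ring
  simp_rw [this, ← Finset.mul_sum]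
  have hj2 : ∑ s : F, (ξ ^ 2) s * ξ (1 - s) = jacobiSum (ξ ^ 2) ξ := rfl
  rw [hj2, show jacobiSum (ξ ^ 2) ξ = jacobiSum (ξ ^ 2) (ξ ^ 2)⁻¹ by rw [hinv],
    jacobiSum_nontrivial_inv hξ2]
  have : (ξ ^ 2) (-1 : F) = 1 := by
    rw [MulChar.pow_apply' ξ two_ne_zero, pow_two, ← map_mul, neg_mul_neg, mul_one, map_one]
  rw [this]
  ring

end Aux3

section Aux4
variable {F : Type*} [Field F] [Fintype F] [DecidableEq F]

noncomputable local instance : Fintype (MulChar F ℂ) := Fintype.ofFinite _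

private lemma cube_count {u : F} (hu : u ≠ 0) :
    ((univ.filter fun x : F => x ^ 3 = u).card : ℂ)
      = ∑ ξ ∈ univ.filter (fun ξ : MulChar F ℂ => ξ ^ 3 = 1), ξ u := by
  by_cases hcube : ∃ c : F, c ^ 3 = u
  · obtain ⟨c, rfl⟩ := hcube
    have hc : c ≠ 0 := fun h => hu (by rw [h]; ring)
    have h1 : ∀ ξ ∈ univ.filter (fun ξ : MulChar F ℂ => ξ ^ 3 = 1), ξ (c ^ 3) = 1 := by
      intro ξ hξ
      rw [map_pow, ← MulChar.pow_apply' ξ three_ne_zero, (mem_filter.mp hξ).2,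
        MulChar.one_apply (isUnit_iff_ne_zero.mpr hc)]
    rw [Finset.sum_congr rfl h1, Finset.sum_const, nsmul_eq_mul, mul_one, Nat.cast_inj]
    have e1 : (univ.filter fun x : F => x ^ 3 = c ^ 3).card
        = (univ.filter fun y : F => y ^ 3 = 1).card := by
      refine Finset.card_nbij' (i := fun x => x * c⁻¹) (j := fun y => y * c) ?_ ?_ ?_ ?_
      · intro x hx
        simp only [mem_coe, mem_filter, mem_univ, true_and] at hx ⊢
        rw [mul_pow, hx, inv_pow, mul_inv_cancel₀ (pow_ne_zero 3 hc)]
      · intro y hy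
        simp only [mem_coe, mem_filter, mem_univ, true_and] at hy ⊢
        rw [mul_pow, hy, one_mul]
      · intro x _; field_simp
      · intro y _; field_simp
    rw [e1]
    -- number of cube roots of unity in F equals number of characters of order dividing 3
    have hEnough : HasEnoughRootsOfUnity ℂ (Monoid.exponent Fˣ) :=
      hasEnoughCRoU _ Monoid.exponent_ne_zero_of_finite
    obtain ⟨e⟩ := MulChar.mulEquiv_units F ℂ
    have e2 : (univ.filter fun ξ : MulChar F ℂ => ξ ^ 3 = 1).card
        = (univ.filter fun w : Fˣ => w ^ 3 = 1).card := by
      refine Finset.card_nbij' (i := fun ξ => e ξ) (j := fun w => e.symm w) ?_ ?_ ?_ ?_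
      · intro ξ hξ
        simp only [mem_coe, mem_filter, mem_univ, true_and] at hξ ⊢
        rw [← map_pow, hξ, map_one]
      · intro w hw
        simp only [mem_coe, mem_filter, mem_univ, true_and] at hw ⊢
        rw [← map_pow, hw, map_one]
      · intro ξ _; simp
      · intro w _; simp
    rw [e2]
    have hne0 : ∀ y ∈ (univ.filter fun y : F => y ^ 3 = 1), y ≠ 0 := by
      intro y hy
      simp only [mem_filter, mem_univ, true_and] at hy
      intro h; rw [h] at hy; simp at hy
    refine (Finset.card_bij' (i := fun (w : Fˣ) _ => (w : F))
      (j := fun (y : F) hy => Units.mk0 y (hne0 y hy)) ?_ ?_ ?_ ?_).symm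
    · intro w hw
      simp only [mem_filter, mem_univ, true_and] at hw ⊢
      rw [← Units.val_pow_eq_pow_val, hw, Units.val_one]
    · intro y hy
      simp only [mem_filter, mem_univ, true_and] at hy ⊢
      ext
      rw [Units.val_pow_eq_pow_val, Units.val_mk0, hy, Units.val_one]
    · intro w _; ext; simp
    · intro y _; simp
  · have hL : (univ.filter fun x : F => x ^ 3 = u) = ∅ := by
      ext x
      simp only [mem_filter, mem_univ, true_and, notMem_empty, iff_false]
      exact fun h => hcube ⟨x, h⟩
    rw [hL, card_empty, Nat.cast_zero]
    -- construct a cubic character nontrivial at u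
    set uu : Fˣ := Units.mk0 u hu with huu
    set H : Subgroup Fˣ := (powMonoidHom 3 : Fˣ →* Fˣ).range with hH
    haveI : Finite (Fˣ ⧸ H) := Quotient.finite _
    have hune : (QuotientGroup.mk uu : Fˣ ⧸ H) ≠ 1 := by
      rw [ne_eq, QuotientGroup.eq_one_iff]
      rintro ⟨c, hc⟩
      exact hcube ⟨(c : F), by rw [← Units.val_pow_eq_pow_val]; exact congrArg _ hc⟩
    have : HasEnoughRootsOfUnity ℂ (Monoid.exponent (Fˣ ⧸ H)) :=
      hasEnoughCRoU (Monoid.exponent (Fˣ ⧸ H)) (Monoid.exponent_ne_zero_of_finite (G := Fˣ ⧸ H))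
    obtain ⟨φ, hφ⟩ := CommGroup.exists_apply_ne_one_of_hasEnoughRootsOfUnity (Fˣ ⧸ H) ℂ hune
    set ξ₀ : MulChar F ℂ := MulChar.ofUnitHom (φ.comp (QuotientGroup.mk' H)) with hx0
    have hξ₀3 : ξ₀ ^ 3 = 1 := by
      rw [MulChar.eq_one_iff]
      intro x
      rw [MulChar.pow_apply_coe, hx0, MulChar.ofUnitHom_coe]
      have : ((φ.comp (QuotientGroup.mk' H)) x : ℂ) ^ 3
          = ((φ ((QuotientGroup.mk' H) x) ^ 3 : ℂˣ) : ℂ) := by push_cast; rfl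
      rw [this, ← map_pow, ← map_pow]
      have : (QuotientGroup.mk' H) (x ^ 3) = 1 := by
        rw [QuotientGroup.mk'_apply, QuotientGroup.eq_one_iff]
        exact ⟨x, rfl⟩
      rw [this, map_one, Units.val_one]
    have hξ₀u : ξ₀ u ≠ 1 := by
      have : ξ₀ u = (φ (QuotientGroup.mk uu) : ℂ) := by
        rw [hx0, show u = (uu : F) from rfl, MulChar.ofUnitHom_coe]; rfl
      rw [this]
      intro h
      exact hφ (Units.ext h)
    -- translation argument
    set T := ∑ ξ ∈ univ.filter (fun ξ : MulChar F ℂ => ξ ^ 3 = 1), ξ u with hT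
    have htrans : ξ₀ u * T = T := by
      rw [hT, Finset.mul_sum]
      have : ∀ ξ ∈ univ.filter (fun ξ : MulChar F ℂ => ξ ^ 3 = 1),
          ξ₀ u * ξ u = (ξ₀ * ξ) u := fun ξ _ => (MulChar.mul_apply ξ₀ ξ u).symm
      rw [Finset.sum_congr rfl this]
      refine Finset.sum_nbij' (i := fun ξ => ξ₀ * ξ) (j := fun ξ => ξ₀⁻¹ * ξ) ?_ ?_ ?_ ?_ ?_
      · intro ξ hξ
        simp only [mem_filter, mem_univ, true_and] at hξ ⊢
        rw [mul_pow, hξ₀3, hξ, one_mul]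
      · intro ξ hξ
        simp only [mem_filter, mem_univ, true_and] at hξ ⊢
        rw [mul_pow, inv_pow, hξ₀3, hξ, inv_one, one_mul]
      · intro ξ _; exact inv_mul_cancel_left ξ₀ ξ
      · intro ξ _; exact mul_inv_cancel_left ξ₀ ξ
      · intro ξ _; rfl
    have h0 : (ξ₀ u - 1) * T = 0 := by rw [sub_mul, one_mul, htrans, sub_self]
    rcases mul_eq_zero.mp h0 with h | h
    · exact absurd (by linear_combination h) hξ₀u
    · exact h.symm

end Aux4

section Main

noncomputable local instance (F : Type*) [Field F] [Fintype F] : Fintype (MulChar F ℂ) :=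
  Fintype.ofFinite _

/-- Let `F` be a finite field of odd characteristic with quadratic character `λ`, and let
`a ∈ F^×`.  Then `∑_{x ∈ F} λ(x³ + a) = −λ(a)·∑_ξ ξ(4a)·j_F(ξ, ξ, ξ)`, where the sum on the
right ranges over the nontrivial multiplicative characters `ξ` of `F` with `ξ³ = 𝟙`. -/
theorem charSum_cubic_plus_const (F : Type*) [Field F] [Fintype F] [DecidableEq F]
    (hodd : ringChar F ≠ 2)
    (lam : MulChar F ℂ) (hlam : orderOf lam = 2)
    (a : F) (ha : a ≠ 0) :
    ∑ x : F, lam (x ^ 3 + a) =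
      -lam a * ∑ᶠ ξ ∈ {ξ : MulChar F ℂ | ξ ≠ 1 ∧ ξ ^ 3 = 1},
        ξ (4 * a) * jacobiSum₃ ξ ξ ξ := by
  set S : Finset (MulChar F ℂ) := univ.filter (fun ξ : MulChar F ℂ => ξ ≠ 1 ∧ ξ ^ 3 = 1)
    with hS
  have hset : {ξ : MulChar F ℂ | ξ ≠ 1 ∧ ξ ^ 3 = 1} = ↑S := by
    ext ξ; simp [hS]
  rw [hset, finsum_mem_coe_finset, Finset.mul_sum]
  set S₃ : Finset (MulChar F ℂ) := univ.filter (fun ξ : MulChar F ℂ => ξ ^ 3 = 1) with hS₃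
  -- T ξ
  set T : MulChar F ℂ → ℂ := fun ξ => ∑ u : F, ξ u * lam (u + a) with hTdef
  -- Step 1: fiberwise
  have step1 : ∑ x : F, lam (x ^ 3 + a)
      = ∑ u : F, ((univ.filter fun x : F => x ^ 3 = u).card : ℂ) * lam (u + a) := by
    rw [← Finset.sum_fiberwise_of_maps_to (fun (x : F) (_ : x ∈ univ) => mem_univ (x ^ 3))
      (fun x => lam (x ^ 3 + a))]
    refine Finset.sum_congr rfl fun u _ => ?_
    calc ∑ x ∈ univ.filter (fun x : F => x ^ 3 = u), lam (x ^ 3 + a)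
        = ∑ _x ∈ univ.filter (fun x : F => x ^ 3 = u), lam (u + a) :=
          Finset.sum_congr rfl fun x hx => by rw [(mem_filter.mp hx).2]
      _ = _ := by rw [Finset.sum_const, nsmul_eq_mul]
  rw [step1]
  -- Step 2: split off u = 0 and use cube_count
  have hcard0 : (univ.filter fun x : F => x ^ 3 = (0:F)) = {0} := by
    ext x; simp [pow_eq_zero_iff]
  have step2 : ∑ u : F, ((univ.filter fun x : F => x ^ 3 = u).card : ℂ) * lam (u + a)
      = lam a + ∑ ξ ∈ S₃, T ξ := by
    rw [← Finset.add_sum_erase univ _ (mem_univ (0:F)), hcard0]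
    simp only [card_singleton, Nat.cast_one, one_mul, zero_add]
    congr 1
    have : ∀ u ∈ univ.erase (0:F),
        ((univ.filter fun x : F => x ^ 3 = u).card : ℂ) * lam (u + a)
          = ∑ ξ ∈ S₃, ξ u * lam (u + a) := by
      intro u hu
      rw [cube_count (mem_erase.mp hu).1, Finset.sum_mul]
    rw [Finset.sum_congr rfl this, Finset.sum_comm]
    refine Finset.sum_congr rfl fun ξ _ => ?_
    rw [hTdef]
    exact Finset.sum_erase univ (by
      rw [MulChar.map_nonunit ξ not_isUnit_zero, zero_mul])
  rw [step2]
  -- Step 3: the trivial character contributes -lam a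
  have h1S₃ : (1 : MulChar F ℂ) ∈ S₃ := by simp [hS₃]
  have hT1 : T 1 = -lam a := by
    rw [hTdef]
    have hz : ∑ u : F, lam (u + a) = 0 := by
      rw [show (fun u : F => lam (u + a)) = fun u => lam ((Equiv.addRight a) u) from rfl,
        Equiv.sum_comp (Equiv.addRight a) lam]
      exact MulChar.sum_eq_zero_of_ne_one (lam_ne_one hlam)
    calc ∑ u : F, (1 : MulChar F ℂ) u * lam (u + a)
        = ∑ u ∈ univ.erase (0:F), (1 : MulChar F ℂ) u * lam (u + a) :=
          (Finset.sum_erase univ (by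
            rw [MulChar.map_nonunit _ not_isUnit_zero, zero_mul])).symm
      _ = ∑ u ∈ univ.erase (0:F), lam (u + a) := Finset.sum_congr rfl fun u hu => by
            rw [MulChar.one_apply (isUnit_iff_ne_zero.mpr (mem_erase.mp hu).1), one_mul]
      _ = ∑ u : F, lam (u + a) - lam (0 + a) := Finset.sum_erase_eq_sub (mem_univ 0)
      _ = -lam a := by rw [hz, zero_add, zero_sub]
  have hSerase : S₃.erase 1 = S := by
    ext ξ; simp [hS, hS₃, mem_erase, and_comm]
  rw [← Finset.add_sum_erase S₃ T h1S₃, hT1, hSerase, ← add_assoc, add_neg_cancel, zero_add]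
  -- Step 4: per-character identity
  refine Finset.sum_congr rfl fun ξ hξ => ?_
  obtain ⟨hξ1, hξ3⟩ := (mem_filter.mp hξ).2
  have hneg1 : ξ (-1 : F) = 1 := by
    have h2 : ξ (-1:F) ^ 2 = 1 := by
      rw [pow_two, ← map_mul, neg_mul_neg, mul_one, map_one]
    have h3 : ξ (-1:F) ^ 3 = 1 := by
      rw [← MulChar.pow_apply' ξ three_ne_zero, hξ3,
        MulChar.one_apply (IsUnit.neg isUnit_one)]
    have := h3
    rw [pow_succ, h2, one_mul] at this
    exact this
  have hTx : T ξ = ξ a * lam a * jacobiSum ξ lam := by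
    rw [hTdef]
    calc ∑ u : F, ξ u * lam (u + a)
        = ∑ t : F, ξ ((Equiv.mulLeft₀ a ha) t) * lam ((Equiv.mulLeft₀ a ha) t + a) :=
          (Equiv.sum_comp (Equiv.mulLeft₀ a ha) (fun u => ξ u * lam (u + a))).symm
      _ = ∑ t : F, (ξ a * lam a) * (ξ t * lam (t + 1)) := by
          refine Finset.sum_congr rfl fun t _ => ?_
          have h1 : (Equiv.mulLeft₀ a ha) t = a * t := rfl
          have h2 : a * t + a = a * (t + 1) := by ring
          rw [h1, h2, map_mul, map_mul]
          ring
      _ = (ξ a * lam a) * ∑ t : F, ξ t * lam (t + 1) := by rw [← Finset.mul_sum]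
      _ = ξ a * lam a * jacobiSum ξ lam := by
          congr 1
          calc ∑ t : F, ξ t * lam (t + 1)
              = ∑ s : F, ξ ((Equiv.neg F) s) * lam ((Equiv.neg F) s + 1) :=
                (Equiv.sum_comp (Equiv.neg F) (fun t => ξ t * lam (t + 1))).symm
            _ = ∑ s : F, ξ s * lam (1 - s) := by
                refine Finset.sum_congr rfl fun s _ => ?_
                have h1 : (Equiv.neg F) s = -s := rfl
                rw [h1, show -s = -1 * s by ring, map_mul, hneg1, one_mul,
                  show -1 * s + 1 = 1 - s by ring]
            _ = jacobiSum ξ lam := rfl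
  rw [hTx, dup hodd hlam hξ1, j3 hξ1 hξ3, map_mul]
  ring

end Main
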